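/- Let d ≥ 2, n = 2d, and let j be an integer with 1 ≤ j < d. Let A = C_n + T(1, j, d+1, n−j), viewed as a matrix over ℚ. Then the characteristic polynomial of A is (x^j−1)(x^{d−j}−1)(x^d−1), and A does not have finite multiplicative order. -/

import Mathlib

open Polynomial

/-- `Ccyc k` is the `k × k` companion matrix of `x^k - 1`: the permutation matrix with `1`
in (1-based) positions `(i+1, i)` for `1 ≤ i ≤ k-1` and in position `(1, k)`. -/
def Ccyc (k : ℕ) : Matrix (Fin k) (Fin k) ℚ :=
  Matrix.of fun r c => if (r : ℕ) = ((c : ℕ) + 1) % k then 1 else 0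

/-- `Tblock n i1 j1 i2 j2` is the `n × n` matrix with entry `1` in (1-based) positions
`(i1, j1)` and `(i2, j2)`, entry `-1` in positions `(i1, j2)` and `(i2, j1)`, and `0`
elsewhere. -/
def Tblock (n i1 j1 i2 j2 : ℕ) : Matrix (Fin n) (Fin n) ℚ :=
  Matrix.of fun r c =>
    (if (r : ℕ) + 1 = i1 ∧ (c : ℕ) + 1 = j1 then (1 : ℚ) else 0)
      + (if (r : ℕ) + 1 = i2 ∧ (c : ℕ) + 1 = j2 then (1 : ℚ) else 0)
      - (if (r : ℕ) + 1 = i1 ∧ (c : ℕ) + 1 = j2 then (1 : ℚ) else 0)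
      - (if (r : ℕ) + 1 = i2 ∧ (c : ℕ) + 1 = j1 then (1 : ℚ) else 0)

/-- Matrix direct sum (block diagonal sum), realized on `Fin (p + q)`. -/
def dsum {p q : ℕ} (A : Matrix (Fin p) (Fin p) ℚ) (B : Matrix (Fin q) (Fin q) ℚ) :
    Matrix (Fin (p + q)) (Fin (p + q)) ℚ :=
  Matrix.reindex finSumFinEquiv finSumFinEquiv (Matrix.fromBlocks A 0 0 B)

/-- A square rational matrix has finite multiplicative order if `A ^ t = 1` for some `t > 0`. -/
def HasFinOrder {n : ℕ} (A : Matrix (Fin n) (Fin n) ℚ) : Prop :=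
  ∃ t : ℕ, 0 < t ∧ A ^ t = 1

/-- `OrderIs A t` : `t` is the least positive integer with `A ^ t = 1`. -/
def OrderIs {n : ℕ} (A : Matrix (Fin n) (Fin n) ℚ) (t : ℕ) : Prop :=
  IsLeast {s : ℕ | 0 < s ∧ A ^ s = 1} t

/-- Alternating sign matrix: entries in `{0, 1, -1}`, all partial row- and column-sums equal
`0` or `1`, and every full row and column sums to `1`. -/
def IsASM {n : ℕ} (A : Matrix (Fin n) (Fin n) ℚ) : Prop :=
  (∀ i j : Fin n, A i j = 0 ∨ A i j = 1 ∨ A i j = -1) ∧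
  (∀ i k : Fin n, (∑ j ∈ Finset.Iic k, A i j) = 0 ∨ (∑ j ∈ Finset.Iic k, A i j) = 1) ∧
  (∀ j k : Fin n, (∑ i ∈ Finset.Iic k, A i j) = 0 ∨ (∑ i ∈ Finset.Iic k, A i j) = 1) ∧
  (∀ i : Fin n, (∑ j, A i j) = 1) ∧
  (∀ j : Fin n, (∑ i, A i j) = 1)

/-- Permutation matrix. -/
def IsPermMat {n : ℕ} (A : Matrix (Fin n) (Fin n) ℚ) : Prop :=
  ∃ σ : Equiv.Perm (Fin n), ∀ i j, A i j = if σ i = j then 1 else 0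

/-- `A` is permutation similar to an alternating sign matrix:
`Pᵀ * A * P` is an ASM for some permutation matrix `P`. -/
def PermSimilarToASM {n : ℕ} (A : Matrix (Fin n) (Fin n) ℚ) : Prop :=
  ∃ P B : Matrix (Fin n) (Fin n) ℚ, IsPermMat P ∧ IsASM B ∧ B = P.transpose * A * P

/-- Similarity over `ℚ`. -/
def SimilarQ {n : ℕ} (A B : Matrix (Fin n) (Fin n) ℚ) : Prop :=
  ∃ S : Matrix (Fin n) (Fin n) ℚ, IsUnit S ∧ B = S⁻¹ * A * S

/-- A `T`-block: a matrix of the form `± T(i1, j1, i2, j2)` with `i1 ≠ i2`, `j1 ≠ j2`. -/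
def IsTBlock {n : ℕ} (M : Matrix (Fin n) (Fin n) ℚ) : Prop :=
  ∃ i1 j1 i2 j2 : ℕ, 1 ≤ i1 ∧ i1 ≤ n ∧ 1 ≤ j1 ∧ j1 ≤ n ∧ 1 ≤ i2 ∧ i2 ≤ n ∧ 1 ≤ j2 ∧ j2 ≤ n ∧
    i1 ≠ i2 ∧ j1 ≠ j2 ∧ (M = Tblock n i1 j1 i2 j2 ∨ M = -Tblock n i1 j1 i2 j2)

namespace StmtAux

open Matrix Polynomial

lemma sum_if_eq {R : Type*} [CommRing R] {m : ℕ} (P : Fin m → Prop) [DecidablePred P]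
    (g : Fin m → R) (c0 : Fin m) (h : ∀ c, P c ↔ c = c0) :
    (∑ c, if P c then g c else 0) = g c0 := by
  have : ∀ c : Fin m, (if P c then g c else 0) = if c = c0 then g c else 0 := by
    intro c; by_cases hc : P c
    · rw [if_pos hc, if_pos ((h c).mp hc)]
    · rw [if_neg hc, if_neg (fun hcc => hc ((h c).mpr hcc))]
  rw [Finset.sum_congr rfl (fun c _ => this c)]
  simp

lemma sum_if_zero {R : Type*} [CommRing R] {m : ℕ} (P : Fin m → Prop) [DecidablePred P]
    (g : Fin m → R) (h : ∀ c, ¬ P c) :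
    (∑ c, if P c then g c else 0) = 0 := by
  simp [h]

/-- Companion-like matrix: arbitrary first row `t`, `x` on the diagonal (except row 0)
and `-1` on the subdiagonal. -/
noncomputable def Wmat (m : ℕ) (x : ℚ[X]) (t : Fin m → ℚ[X]) : Matrix (Fin m) (Fin m) ℚ[X] :=
  Matrix.of fun r c => if (r : ℕ) = 0 then t c else
    (if (c : ℕ) = (r : ℕ) then x else 0) + (if (c : ℕ) + 1 = (r : ℕ) then -1 else 0)

lemma det_Wmat : ∀ (m : ℕ) (x : ℚ[X]) (t : Fin (m+1) → ℚ[X]),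
    (Wmat (m+1) x t).det = ∑ c : Fin (m+1), t c * x ^ (m - (c : ℕ)) := by
  intro m
  induction m with
  | zero =>
      intro x t
      simp [Wmat, Matrix.det_fin_one]
  | succ m ih =>
      intro x t
      rw [Matrix.det_succ_column_zero, Fin.sum_univ_succ, Fin.sum_univ_succ]
      have hz : ∀ i : Fin m, ((-1 : ℚ[X]) ^ ((i.succ.succ : Fin (m+1+1)) : ℕ) *
          Wmat (m+1+1) x t i.succ.succ 0 *
          ((Wmat (m+1+1) x t).submatrix i.succ.succ.succAbove Fin.succ).det) = 0 := by
        intro i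
        have : Wmat (m+1+1) x t i.succ.succ 0 = 0 := by
          simp [Wmat]
        rw [this]; ring
      rw [Finset.sum_congr rfl (fun i _ => hz i), Finset.sum_const_zero, add_zero]
      have h00 : Wmat (m+1+1) x t 0 0 = t 0 := by simp [Wmat]
      have h10 : Wmat (m+1+1) x t 1 0 = -1 := by
        simp [Wmat]
      -- minor at (0,0) is lower triangular with diagonal x
      have hminor0 : ((Wmat (m+1+1) x t).submatrix (Fin.succAbove 0) Fin.succ).det
          = x ^ (m+1) := by
        have ht : ((Wmat (m+1+1) x t).submatrix (Fin.succAbove 0) Fin.succ).BlockTriangular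
            OrderDual.toDual := by
          intro a b hab
          have hab' : (a : ℕ) < (b : ℕ) := hab
          simp only [Matrix.submatrix_apply, Fin.succAbove_zero, Wmat, Matrix.of_apply,
            Fin.val_succ]
          rw [if_neg (by omega), if_neg (by omega), if_neg (by omega)]
          simp
        rw [Matrix.det_of_lowerTriangular _ ht]
        have hd : ∀ a : Fin (m+1),
            ((Wmat (m+1+1) x t).submatrix (Fin.succAbove 0) Fin.succ) a a = x := by
          intro a
          simp only [Matrix.submatrix_apply, Fin.succAbove_zero, Wmat, Matrix.of_apply,
            Fin.val_succ]
          rw [if_neg (by omega)]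
          simp
        rw [Finset.prod_congr rfl (fun a _ => hd a)]
        simp
      -- minor at (1,0) is `Wmat (m+1) x (t ∘ Fin.succ)`
      have hminor1 : ((Wmat (m+1+1) x t).submatrix (Fin.succAbove 1) Fin.succ)
          = Wmat (m+1) x (t ∘ Fin.succ) := by
        refine Matrix.ext fun r c => ?_
        have hs : (((1 : Fin (m+1+1)).succAbove r : Fin (m+1+1)) : ℕ)
            = if (r : ℕ) = 0 then 0 else (r : ℕ) + 1 := by
          rcases Nat.eq_zero_or_pos (r : ℕ) with h | h
          · rw [Fin.succAbove_of_castSucc_lt]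
            · rw [if_pos h]; simp [h]
            · rw [Fin.lt_def]; show (r:ℕ) < ((1 : Fin (m+1+1)) : ℕ); simp only [Fin.val_one]; omega
          · rw [Fin.succAbove_of_le_castSucc]
            · rw [if_neg (by omega)]; simp
            · rw [Fin.le_def]; simp [Fin.val_one]; omega
        simp only [Matrix.submatrix_apply, Wmat, Matrix.of_apply, Fin.val_succ, Function.comp,
          hs]
        split_ifs <;> first | rfl | omega | exact absurd rfl (by omega) | simp_all | ring
      have e1 : Fin.succ (0 : Fin (m+1)) = (1 : Fin (m+1+1)) := rfl
      rw [e1, h00, h10, hminor0, hminor1, ih]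
      rw [Fin.sum_univ_succ (f := fun c : Fin (m+1+1) => t c * x ^ (m + 1 - (c : ℕ)))]
      simp only [Fin.val_zero, pow_zero, Fin.val_one, pow_one, one_mul, Nat.sub_zero,
        Fin.val_succ, Function.comp]
      have hc : ∀ c : Fin (m+1), t c.succ * x ^ (m - (c : ℕ))
          = t c.succ * x ^ (m + 1 - ((c : ℕ) + 1)) := by
        intro c; congr 2; omega
      rw [Finset.sum_congr rfl (fun c _ => hc c)]
      ring


lemma sum_if_eqP {m : ℕ} (P : Fin m → Prop) [inst : DecidablePred P]
    (g : Fin m → ℚ[X]) (c0 : Fin m) (h : ∀ c, P c ↔ c = c0) :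
    (∑ c, if P c then g c else (0:ℚ[X])) = g c0 := by
  have h' : ∀ c : Fin m, (if P c then g c else 0) = if c = c0 then g c else 0 := by
    intro c; by_cases hc : P c
    · rw [if_pos hc, if_pos ((h c).mp hc)]
    · rw [if_neg hc, if_neg (fun hcc => hc ((h c).mpr hcc))]
  rw [Finset.sum_congr rfl (fun c _ => h' c)]
  simp


def Nmat (d : ℕ) : Matrix (Fin d) (Fin d) ℚ :=
  Matrix.of fun r c => if (r : ℕ) = (c : ℕ) + 1 then 1 else 0

def Umat (d k : ℕ) : Matrix (Fin d) (Fin d) ℚ :=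
  Matrix.of fun r c => if (r : ℕ) = 0 ∧ (c : ℕ) + 1 = k then 1 else 0

def M1 (d j : ℕ) : Matrix (Fin d) (Fin d) ℚ := Nmat d + Umat d j + Umat d (d-j) - Umat d d

def M2 (d : ℕ) : Matrix (Fin d) (Fin d) ℚ := Nmat d + Umat d d

noncomputable def t1 (d j : ℕ) : Fin d → ℚ[X] := fun c =>
  (if (c : ℕ) = 0 then X else 0) - (if (c : ℕ) + 1 = j then 1 else 0)
    - (if (c : ℕ) + 1 = d - j then 1 else 0) + (if (c : ℕ) + 1 = d then 1 else 0)

noncomputable def t2 (d : ℕ) : Fin d → ℚ[X] := fun c =>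
  (if (c : ℕ) = 0 then X else 0) - (if (c : ℕ) + 1 = d then 1 else 0)

set_option maxHeartbeats 1000000 in
lemma charmatrix_M1 (d j : ℕ) : charmatrix (M1 d j) = Wmat d X (t1 d j) := by
  refine Matrix.ext fun r c => ?_
  rw [charmatrix_apply]
  simp only [M1, Nmat, Umat, Matrix.sub_apply, Matrix.add_apply, Matrix.of_apply, Wmat, t1,
    Matrix.diagonal_apply, map_sub, map_add, apply_ite C, Polynomial.C_1, Polynomial.C_0,
    Fin.ext_iff]
  by_cases hr0 : (r : ℕ) = 0
  · simp only [hr0, true_and, eq_self_iff_true, if_true]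
    split_ifs <;> first | (exfalso; omega) | contradiction | ring
  · simp only [hr0, false_and, if_false]
    split_ifs <;> first | (exfalso; omega) | contradiction | ring

set_option maxHeartbeats 1000000 in
lemma charmatrix_M2 (d : ℕ) : charmatrix (M2 d) = Wmat d X (t2 d) := by
  refine Matrix.ext fun r c => ?_
  rw [charmatrix_apply]
  simp only [M2, Nmat, Umat, Matrix.add_apply, Matrix.of_apply, Wmat, t2,
    Matrix.diagonal_apply, map_add, apply_ite C, Polynomial.C_1, Polynomial.C_0, Fin.ext_iff]
  by_cases hr0 : (r : ℕ) = 0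
  · simp only [hr0, true_and, eq_self_iff_true, if_true]
    split_ifs <;> first | (exfalso; omega) | contradiction | ring
  · simp only [hr0, false_and, if_false]
    split_ifs <;> first | (exfalso; omega) | contradiction | ring

set_option maxHeartbeats 1000000 in
lemma charpoly_M1 (d j : ℕ) (hj1 : 1 ≤ j) (hj2 : j < d) :
    (M1 d j).charpoly = X ^ d - X ^ (d - j) - X ^ j + 1 := by
  obtain ⟨m, rfl⟩ : ∃ m, d = m + 1 := ⟨d - 1, by omega⟩
  unfold Matrix.charpoly
  rw [charmatrix_M1, det_Wmat]
  have expand : ∀ c : Fin (m+1), t1 (m+1) j c * X ^ (m - (c : ℕ)) =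
      (if (c : ℕ) = 0 then X * X ^ (m - (c : ℕ)) else 0)
      - (if (c : ℕ) + 1 = j then X ^ (m - (c : ℕ)) else 0)
      - (if (c : ℕ) + 1 = (m+1) - j then X ^ (m - (c : ℕ)) else 0)
      + (if (c : ℕ) + 1 = m + 1 then X ^ (m - (c : ℕ)) else 0) := by
    intro c
    simp only [t1, ite_mul, zero_mul, one_mul, sub_mul, add_mul]
  rw [Finset.sum_congr rfl (fun c _ => expand c)]
  rw [Finset.sum_add_distrib, Finset.sum_sub_distrib, Finset.sum_sub_distrib]
  have h1 : (∑ c : Fin (m+1), if (c : ℕ) = 0 then X * X ^ (m - (c : ℕ)) else 0)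
      = X * X ^ (m - ((⟨0, by omega⟩ : Fin (m+1)) : ℕ)) :=
    sum_if_eqP (fun c : Fin (m+1) => (c:ℕ) = 0) (fun c : Fin (m+1) => X * X ^ (m - (c:ℕ)))
      ⟨0, Nat.succ_pos m⟩ (fun c => ⟨fun h => Fin.ext h, fun h => congrArg Fin.val h⟩)
  have h2 : (∑ c : Fin (m+1), if (c : ℕ) + 1 = j then X ^ (m - (c : ℕ)) else 0)
      = X ^ (m - ((⟨j - 1, by omega⟩ : Fin (m+1)) : ℕ)) :=
    sum_if_eqP _ _ _ (fun c => by rw [Fin.ext_iff]; simp; all_goals omega)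
  have h3 : (∑ c : Fin (m+1), if (c : ℕ) + 1 = (m+1) - j then X ^ (m - (c : ℕ)) else 0)
      = X ^ (m - ((⟨m - j, by omega⟩ : Fin (m+1)) : ℕ)) :=
    sum_if_eqP _ _ _ (fun c => by rw [Fin.ext_iff]; simp; all_goals omega)
  have h4 : (∑ c : Fin (m+1), if (c : ℕ) + 1 = m + 1 then X ^ (m - (c : ℕ)) else 0)
      = X ^ (m - ((⟨m, by omega⟩ : Fin (m+1)) : ℕ)) :=
    sum_if_eqP _ _ _ (fun c => by rw [Fin.ext_iff]; simp; all_goals omega)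
  rw [h1, h2, h3, h4]
  simp only [Fin.val_mk]
  have e0 : (X:ℚ[X]) * X ^ (m - (0:ℕ)) = X ^ (m + 1) := by rw [Nat.sub_zero, ← pow_succ']
  have e1 : m - (j - 1) = m + 1 - j := by omega
  have e2 : m - (m - j) = j := by omega
  rw [e0, e1, e2, Nat.sub_self, pow_zero]

set_option maxHeartbeats 1000000 in
lemma charpoly_M2 (d : ℕ) (hd : 1 ≤ d) : (M2 d).charpoly = X ^ d - 1 := by
  obtain ⟨m, rfl⟩ : ∃ m, d = m + 1 := ⟨d - 1, by omega⟩
  unfold Matrix.charpoly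
  rw [charmatrix_M2, det_Wmat]
  have expand : ∀ c : Fin (m+1), t2 (m+1) c * X ^ (m - (c : ℕ)) =
      (if (c : ℕ) = 0 then X * X ^ (m - (c : ℕ)) else 0)
      - (if (c : ℕ) + 1 = m + 1 then X ^ (m - (c : ℕ)) else 0) := by
    intro c
    simp only [t2, ite_mul, zero_mul, one_mul, sub_mul]
  rw [Finset.sum_congr rfl (fun c _ => expand c)]
  rw [Finset.sum_sub_distrib]
  have h1 : (∑ c : Fin (m+1), if (c : ℕ) = 0 then X * X ^ (m - (c : ℕ)) else 0)
      = X * X ^ (m - ((⟨0, by omega⟩ : Fin (m+1)) : ℕ)) :=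
    sum_if_eqP (fun c : Fin (m+1) => (c:ℕ) = 0) (fun c : Fin (m+1) => X * X ^ (m - (c:ℕ)))
      ⟨0, Nat.succ_pos m⟩ (fun c => ⟨fun h => Fin.ext h, fun h => congrArg Fin.val h⟩)
  have h4 : (∑ c : Fin (m+1), if (c : ℕ) + 1 = m + 1 then X ^ (m - (c : ℕ)) else 0)
      = X ^ (m - ((⟨m, by omega⟩ : Fin (m+1)) : ℕ)) :=
    sum_if_eqP _ _ _ (fun c => by rw [Fin.ext_iff]; simp; all_goals omega)
  rw [h1, h4]
  simp only [Fin.val_mk]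
  have e0 : (X:ℚ[X]) * X ^ (m - (0:ℕ)) = X ^ (m + 1) := by rw [Nat.sub_zero, ← pow_succ']
  rw [e0, Nat.sub_self, pow_zero]


def ee (d n : ℕ) (h : d + d = n) : Fin d ⊕ Fin d ≃ Fin n :=
  finSumFinEquiv.trans (finCongr h)

lemma ee_inl (d n : ℕ) (h : d + d = n) (i : Fin d) :
    ((ee d n h (Sum.inl i)) : ℕ) = (i : ℕ) := by
  simp [ee]

lemma ee_inr (d n : ℕ) (h : d + d = n) (i : Fin d) :
    ((ee d n h (Sum.inr i)) : ℕ) = d + (i : ℕ) := by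
  simp [ee]; omega

set_option maxHeartbeats 1600000 in
lemma A_block (d j : ℕ) (hd : 2 ≤ d) (hj1 : 1 ≤ j) (hj2 : j < d) :
    Ccyc (2*d) + Tblock (2*d) 1 j (d+1) (2*d - j)
      = Matrix.reindex (ee d (2*d) (by ring)) (ee d (2*d) (by ring))
          (Matrix.fromBlocks (Nmat d + Umat d j) (Umat d d - Umat d (d-j))
            (Umat d d - Umat d j) (Nmat d + Umat d (d-j))) := by
  set e := ee d (2*d) (by ring : d + d = 2*d) with he
  rw [Matrix.reindex_apply]
  refine Matrix.ext fun r c => ?_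
  obtain ⟨i, rfl⟩ := e.surjective r
  obtain ⟨k, rfl⟩ := e.surjective c
  rw [Matrix.submatrix_apply, Equiv.symm_apply_apply, Equiv.symm_apply_apply]
  rcases i with i | i <;> rcases k with k | k <;>
    simp only [Ccyc, Tblock, Nmat, Umat, Matrix.add_apply, Matrix.sub_apply, Matrix.of_apply,
      Matrix.fromBlocks, Sum.elim_inl, Sum.elim_inr, he, ee_inl, ee_inr]
  · rw [Nat.mod_eq_of_lt (by omega : (k:ℕ) + 1 < 2*d)]
    split_ifs <;> first | (exfalso; omega) | contradiction | norm_num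
  · by_cases hk : (k : ℕ) + 1 = d
    · rw [show d + (k:ℕ) + 1 = 2*d by omega, Nat.mod_self]
      split_ifs <;> first | (exfalso; omega) | contradiction | norm_num
    · rw [Nat.mod_eq_of_lt (by omega : d + (k:ℕ) + 1 < 2*d)]
      split_ifs <;> first | (exfalso; omega) | contradiction | norm_num
  · rw [Nat.mod_eq_of_lt (by omega : (k:ℕ) + 1 < 2*d)]
    split_ifs <;> first | (exfalso; omega) | contradiction | norm_num
  · by_cases hk : (k : ℕ) + 1 = d
    · rw [show d + (k:ℕ) + 1 = 2*d by omega, Nat.mod_self]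
      split_ifs <;> first | (exfalso; omega) | contradiction | norm_num
    · rw [Nat.mod_eq_of_lt (by omega : d + (k:ℕ) + 1 < 2*d)]
      split_ifs <;> first | (exfalso; omega) | contradiction | norm_num


/-- the change-of-basis block matrix [[1,1],[-1,1]] -/
def SBm (d : ℕ) : Matrix (Fin d ⊕ Fin d) (Fin d ⊕ Fin d) ℚ :=
  Matrix.fromBlocks 1 1 (-1) 1

def SBi (d : ℕ) : Matrix (Fin d ⊕ Fin d) (Fin d ⊕ Fin d) ℚ :=
  Matrix.fromBlocks ((2:ℚ)⁻¹ • 1) (-((2:ℚ)⁻¹ • 1)) ((2:ℚ)⁻¹ • 1) ((2:ℚ)⁻¹ • 1)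

lemma SB_mul_SBi (d : ℕ) : SBm d * SBi d = 1 := by
  unfold SBm SBi
  rw [Matrix.fromBlocks_multiply, ← Matrix.fromBlocks_one, Matrix.fromBlocks_inj]
  refine ⟨?_, ?_, ?_, ?_⟩ <;>
    simp only [Matrix.one_mul, Matrix.neg_mul, Matrix.mul_one, neg_neg] <;>
    first
      | (rw [← add_smul]; norm_num)
      | exact neg_add_cancel _

/-- the key intertwining identity -/
lemma key_identity (d j : ℕ) :
    Matrix.fromBlocks (Nmat d + Umat d j) (Umat d d - Umat d (d-j))
        (Umat d d - Umat d j) (Nmat d + Umat d (d-j)) * SBm d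
      = SBm d * Matrix.fromBlocks (M1 d j) (Umat d j - Umat d (d-j)) 0 (M2 d) := by
  unfold SBm M1 M2
  rw [Matrix.fromBlocks_multiply, Matrix.fromBlocks_multiply, Matrix.fromBlocks_inj]
  refine ⟨?_, ?_, ?_, ?_⟩ <;>
    simp only [Matrix.mul_one, Matrix.one_mul, mul_neg_one, neg_one_mul, Matrix.neg_mul,
      Matrix.mul_zero, Matrix.zero_mul, add_zero, zero_add, neg_neg] <;>
    abel

lemma reindex_mul {R : Type*} [CommRing R] {I J : Type*} [Fintype I] [Fintype J]
    [DecidableEq I] [DecidableEq J] (e : I ≃ J) (M N : Matrix I I R) :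
    Matrix.reindex e e M * Matrix.reindex e e N = Matrix.reindex e e (M * N) := by
  simp only [Matrix.reindex_apply, Matrix.submatrix_mul_equiv]

lemma reindex_one {R : Type*} [CommRing R] {I J : Type*} [Fintype I] [Fintype J]
    [DecidableEq I] [DecidableEq J] (e : I ≃ J) :
    Matrix.reindex e e (1 : Matrix I I R) = 1 := by
  simp [Matrix.reindex_apply, Matrix.submatrix_one_equiv]

lemma reindex_pow {R : Type*} [CommRing R] {I J : Type*} [Fintype I] [Fintype J]
    [DecidableEq I] [DecidableEq J] (e : I ≃ J) (M : Matrix I I R) (t : ℕ) :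
    (Matrix.reindex e e M) ^ t = Matrix.reindex e e (M ^ t) := by
  induction t with
  | zero => simp [reindex_one]
  | succ t ih => rw [pow_succ, pow_succ, ih, reindex_mul]

/-- conjugate matrices have equal charpoly -/
lemma charpoly_conj {I : Type*} [Fintype I] [DecidableEq I] (A B S S' : Matrix I I ℚ)
    (hSS' : S * S' = 1) (hAS : A * S = S * B) : A.charpoly = B.charpoly := by
  classical
  set SC := S.map (C : ℚ →+* ℚ[X]) with hSC
  set S'C := S'.map (C : ℚ →+* ℚ[X]) with hS'C
  have h1 : SC * S'C = 1 := by
    rw [hSC, hS'C, ← Matrix.map_mul, hSS', Matrix.map_one _ (map_zero _) (map_one _)]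
  have hcomm : charmatrix A * SC = SC * charmatrix B := by
    unfold charmatrix
    rw [sub_mul, mul_sub]
    congr 1
    · exact (Matrix.scalar_commute (X : ℚ[X]) (fun r => Commute.all _ _) SC).eq
    · rw [RingHom.mapMatrix_apply, RingHom.mapMatrix_apply, hSC, ← Matrix.map_mul, hAS,
        Matrix.map_mul]
  have hdet := congrArg Matrix.det hcomm
  rw [Matrix.det_mul, Matrix.det_mul] at hdet
  have hunit : SC.det ≠ 0 := by
    intro h0
    have := congrArg Matrix.det h1
    rw [Matrix.det_mul, h0, zero_mul, Matrix.det_one] at this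
    exact zero_ne_one this
  unfold Matrix.charpoly
  have : (charmatrix A).det * SC.det = (charmatrix B).det * SC.det := by
    rw [hdet]; ring
  exact mul_right_cancel₀ hunit this

lemma pow_fromBlocks {d : ℕ} (X Y F : Matrix (Fin d) (Fin d) ℚ) (t : ℕ) :
    ∃ G, (Matrix.fromBlocks X F 0 Y) ^ t = Matrix.fromBlocks (X ^ t) G 0 (Y ^ t) := by
  induction t with
  | zero => exact ⟨0, by rw [pow_zero, pow_zero, pow_zero, Matrix.fromBlocks_one]⟩
  | succ t ih =>
      obtain ⟨G, hG⟩ := ih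
      refine ⟨X ^ t * F + G * Y, ?_⟩
      rw [pow_succ, pow_succ, pow_succ, hG, Matrix.fromBlocks_multiply]
      simp only [Matrix.mul_zero, Matrix.zero_mul, add_zero, zero_add]

-- mulVec computations
lemma Umat_mulVec (d k : ℕ) (hk1 : 1 ≤ k) (hk2 : k ≤ d) (x : Fin d → ℚ) :
    (Umat d k).mulVec x = fun r : Fin d => if (r : ℕ) = 0 then x ⟨k-1, by omega⟩ else 0 := by
  funext r
  simp only [Matrix.mulVec, dotProduct, Umat, Matrix.of_apply]
  by_cases hr : (r : ℕ) = 0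
  · rw [if_pos hr]
    have h' : ∀ c : Fin d, (if (r:ℕ) = 0 ∧ (c:ℕ)+1 = k then (1:ℚ) else 0) * x c
        = if (c:ℕ)+1 = k then x c else 0 := by
      intro c
      by_cases h : (c:ℕ)+1 = k
      · rw [if_pos ⟨hr, h⟩, if_pos h, one_mul]
      · rw [if_neg (fun hh => h hh.2), if_neg h, zero_mul]
    rw [Finset.sum_congr rfl fun c _ => h' c]
    exact sum_if_eq _ _ _ (fun c => by rw [Fin.ext_iff]; simp; omega)
  · rw [if_neg hr]
    apply Finset.sum_eq_zero; intro c _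
    rw [if_neg (fun hh => hr hh.1), zero_mul]

lemma Nmat_mulVec (d : ℕ) (x : Fin d → ℚ) (r : Fin d) :
    (Nmat d).mulVec x r = if (r : ℕ) = 0 then 0
      else x ⟨(r:ℕ)-1, lt_of_le_of_lt (Nat.sub_le _ _) r.isLt⟩ := by
  simp only [Matrix.mulVec, dotProduct, Nmat, Matrix.of_apply]
  by_cases hr : (r : ℕ) = 0
  · rw [if_pos hr]
    apply Finset.sum_eq_zero; intro c _
    rw [if_neg (by omega), zero_mul]
  · rw [if_neg hr]
    have h' : ∀ c : Fin d, (if (r:ℕ) = (c:ℕ)+1 then (1:ℚ) else 0) * x c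
        = if (r:ℕ) = (c:ℕ)+1 then x c else 0 := by
      intro c; by_cases h : (r:ℕ) = (c:ℕ)+1
      · rw [if_pos h, if_pos h, one_mul]
      · rw [if_neg h, if_neg h, zero_mul]
    rw [Finset.sum_congr rfl fun c _ => h' c]
    exact sum_if_eq _ _ _ (fun c => by rw [Fin.ext_iff]; simp; omega)

lemma M1_mulVec_ones (d j : ℕ) (hd : 2 ≤ d) (hj1 : 1 ≤ j) (hj2 : j < d) :
    (M1 d j).mulVec (fun _ : Fin d => (1:ℚ)) = fun _ : Fin d => (1:ℚ) := by
  funext r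
  unfold M1
  rw [Matrix.sub_mulVec, Matrix.add_mulVec, Matrix.add_mulVec]
  simp only [Pi.sub_apply, Pi.add_apply]
  rw [Nmat_mulVec, Umat_mulVec d j hj1 (by omega), Umat_mulVec d (d-j) (by omega) (by omega),
    Umat_mulVec d d (by omega) le_rfl]
  by_cases hr : (r : ℕ) = 0 <;> simp [hr]

lemma M1_mulVec_z (d j : ℕ) (hd : 2 ≤ d) (hj1 : 1 ≤ j) (hj2 : j < d) :
    (M1 d j).mulVec (fun c : Fin d => -((c:ℕ):ℚ)) = fun c : Fin d => -((c:ℕ):ℚ) + 1 := by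
  funext r
  unfold M1
  rw [Matrix.sub_mulVec, Matrix.add_mulVec, Matrix.add_mulVec]
  simp only [Pi.sub_apply, Pi.add_apply]
  rw [Nmat_mulVec, Umat_mulVec d j hj1 (by omega), Umat_mulVec d (d-j) (by omega) (by omega),
    Umat_mulVec d d (by omega) le_rfl]
  by_cases hr : (r : ℕ) = 0
  · simp only [hr, if_true, eq_self_iff_true, Fin.val_mk]
    push_cast [Nat.cast_sub hj1, Nat.cast_sub (by omega : 1 ≤ d - j),
      Nat.cast_sub (by omega : 1 ≤ d), Nat.cast_sub hj2.le]
    ring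
  · simp only [hr, if_false, Fin.val_mk]
    push_cast [Nat.cast_sub (by omega : 1 ≤ (r:ℕ))]
    ring

lemma M1_not_fin_order (d j t : ℕ) (hd : 2 ≤ d) (hj1 : 1 ≤ j) (hj2 : j < d) (ht : 0 < t) :
    (M1 d j) ^ t ≠ 1 := by
  have hchain : ∀ s : ℕ, ((M1 d j) ^ s).mulVec (fun c : Fin d => -((c:ℕ):ℚ))
      = fun c : Fin d => -((c:ℕ):ℚ) + (s:ℚ) := by
    intro s
    induction s with
    | zero => rw [pow_zero, Matrix.one_mulVec]; funext c; simp
    | succ s ih =>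
        rw [pow_succ', ← Matrix.mulVec_mulVec, ih]
        have hsplit : (fun c : Fin d => -((c:ℕ):ℚ) + (s:ℚ))
            = (fun c : Fin d => -((c:ℕ):ℚ)) + (s:ℚ) • (fun _ : Fin d => (1:ℚ)) := by
          funext c; simp
        rw [hsplit, Matrix.mulVec_add, Matrix.mulVec_smul, M1_mulVec_z d j hd hj1 hj2,
          M1_mulVec_ones d j hd hj1 hj2]
        funext c
        simp only [Pi.add_apply, Pi.smul_apply, smul_eq_mul]
        push_cast
        ring
  intro h1
  have h2 := hchain t
  rw [h1, Matrix.one_mulVec] at h2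
  have h3 := congrFun h2 ⟨0, by omega⟩
  simp only [Fin.val_mk, Nat.cast_zero, neg_zero, zero_add, left_eq_add] at h3
  exact (Nat.cast_ne_zero.mpr ht.ne') h3.symm


end StmtAux

theorem stmt1 (d n j : ℕ) (hd : 2 ≤ d) (hn : n = 2 * d) (hj1 : 1 ≤ j) (hj2 : j < d)
    (A : Matrix (Fin n) (Fin n) ℚ)
    (hA : A = Ccyc n + Tblock n 1 j (d + 1) (n - j)) :
    Matrix.charpoly A = (X ^ j - 1) * (X ^ (d - j) - 1) * (X ^ d - 1) ∧
      ¬ HasFinOrder A := by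
  subst hn
  subst hA
  set e : Fin d ⊕ Fin d ≃ Fin (2*d) := StmtAux.ee d (2*d) (by ring) with he
  set Bb := Matrix.fromBlocks (StmtAux.M1 d j) (StmtAux.Umat d j - StmtAux.Umat d (d-j)) 0
    (StmtAux.M2 d) with hBb
  have hblk := StmtAux.A_block d j hd hj1 hj2
  have hAS : (Ccyc (2*d) + Tblock (2*d) 1 j (d+1) (2*d - j)) * Matrix.reindex e e (StmtAux.SBm d)
      = Matrix.reindex e e (StmtAux.SBm d) * Matrix.reindex e e Bb := by
    rw [hblk, StmtAux.reindex_mul, StmtAux.reindex_mul, StmtAux.key_identity, hBb]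
  have hSS' : Matrix.reindex e e (StmtAux.SBm d) * Matrix.reindex e e (StmtAux.SBi d) = 1 := by
    rw [StmtAux.reindex_mul, StmtAux.SB_mul_SBi, StmtAux.reindex_one]
  constructor
  · have h1 : Matrix.charpoly (Ccyc (2*d) + Tblock (2*d) 1 j (d+1) (2*d - j))
        = Matrix.charpoly (Matrix.reindex e e Bb) :=
      StmtAux.charpoly_conj _ _ _ _ hSS' hAS
    rw [h1, Matrix.charpoly_reindex, hBb, Matrix.charpoly_fromBlocks_zero₂₁,
      StmtAux.charpoly_M1 d j hj1 hj2, StmtAux.charpoly_M2 d (by omega)]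
    have hx : (X:ℚ[X])^j * X^(d-j) = X^d := by rw [← pow_add]; congr 1; omega
    linear_combination ((1:ℚ[X]) - X^d) * hx
  · rintro ⟨t, ht, hpow⟩
    have hpowS : ∀ s : ℕ, (Ccyc (2*d) + Tblock (2*d) 1 j (d+1) (2*d - j)) ^ s
          * Matrix.reindex e e (StmtAux.SBm d)
        = Matrix.reindex e e (StmtAux.SBm d) * (Matrix.reindex e e Bb) ^ s := by
      intro s; induction s with
      | zero => rw [pow_zero, pow_zero, Matrix.one_mul, Matrix.mul_one]
      | succ s ih =>
          rw [pow_succ, pow_succ, Matrix.mul_assoc, hAS, ← Matrix.mul_assoc, ih,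
            Matrix.mul_assoc]
    have h2 := hpowS t
    rw [hpow, Matrix.one_mul] at h2
    have hS'S : Matrix.reindex e e (StmtAux.SBi d) * Matrix.reindex e e (StmtAux.SBm d) = 1 :=
      mul_eq_one_comm.mp hSS'
    have h3 : (Matrix.reindex e e Bb) ^ t = 1 := by
      calc (Matrix.reindex e e Bb) ^ t
          = (Matrix.reindex e e (StmtAux.SBi d) * Matrix.reindex e e (StmtAux.SBm d))
              * (Matrix.reindex e e Bb) ^ t := by rw [hS'S, Matrix.one_mul]
        _ = Matrix.reindex e e (StmtAux.SBi d)
              * (Matrix.reindex e e (StmtAux.SBm d) * (Matrix.reindex e e Bb) ^ t) := by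
            rw [Matrix.mul_assoc]
        _ = Matrix.reindex e e (StmtAux.SBi d) * Matrix.reindex e e (StmtAux.SBm d) := by
            rw [← h2]
        _ = 1 := hS'S
    rw [StmtAux.reindex_pow] at h3
    have h4 : Bb ^ t = 1 := by
      apply (Matrix.reindex e e).injective
      rw [StmtAux.reindex_one]
      exact h3
    obtain ⟨G, hG⟩ := StmtAux.pow_fromBlocks (StmtAux.M1 d j) (StmtAux.M2 d)
      (StmtAux.Umat d j - StmtAux.Umat d (d-j)) t
    rw [hBb, hG] at h4
    have h5 : (StmtAux.M1 d j) ^ t = 1 := by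
      have h6 := congrArg Matrix.toBlocks₁₁ h4
      rwa [Matrix.toBlocks_fromBlocks₁₁, ← Matrix.fromBlocks_one,
        Matrix.toBlocks_fromBlocks₁₁] at h6
    exact StmtAux.M1_not_fin_order d j t hd hj1 hj2 ht h5
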